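/- arXiv:math/0509070 — 3 statements merged into one kernel-verified Lean document; each statement's English description precedes it below -/
import Mathlib

section
/- Let a, b, L, ρ > 0, let ϑ₂ : [0,a] → [0,b] be continuous, and let D := {(s,t) : 0 ≤ s ≤ a, 0 ≤ t ≤ ϑ₂(s)}. Let g : D × ℝⁿ × ℝⁿ × ℝⁿ → ℝⁿ be continuous and satisfy |g(σ,τ,Ψ₁,P₁,Q₁) − g(σ,τ,Ψ₂,P₂,Q₂)| ≤ L(|Ψ₁−Ψ₂| + |P₁−P₂| + |Q₁−Q₂|) for all arguments, where |·| is the Euclidean norm on ℝⁿ. Let p₀ : D → ℝⁿ be continuous, and for continuous (ψ,P,Q) : D → (ℝⁿ)³ define (𝐏(ψ,P,Q))(s,t) := p₀(s,t) − ∫_t^{ϑ₂(s)} g(s,τ,ψ(s,τ),P(s,τ),Q(s,τ)) dτ. Define the weighted norm ‖f‖_ρ := max_{(s,t)∈D} e^{−ρ(a−s+b−t)} |f(s,t)|. Then for all continuous triples (ψ₁,P₁,Q₁) and (ψ₂,P₂,Q₂) and all (s,t) ∈ D: e^{−ρ(a−s+b−t)} |(𝐏(ψ₁,P₁,Q₁))(s,t)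 − (𝐏(ψ₂,P₂,Q₂))(s,t)| ≤ L · ((1−e^{−ρb})/ρ) · ( ‖ψ₁−ψ₂‖_ρ + ‖P₁−P₂‖_ρ + ‖Q₁−Q₂‖_ρ ). -/
open Set MeasureTheory intervalIntegral

lemma exp_int' (ρ c t T : ℝ) (hρ : 0 < ρ) :
    ∫ τ in t..T, Real.exp (ρ * (c - τ)) =
      (Real.exp (ρ * (c - t)) - Real.exp (ρ * (c - T))) / ρ := by
  have hderiv : ∀ τ ∈ uIcc t T, HasDerivAt (fun τ => -Real.exp (ρ * (c - τ)) / ρ)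
      (Real.exp (ρ * (c - τ))) τ := by
    intro τ _
    have h1 : HasDerivAt (fun τ : ℝ => ρ * (c - τ)) (-ρ) τ := by
      simpa using ((hasDerivAt_id τ).const_sub c).const_mul ρ
    have h2 := (h1.exp.neg).div_const ρ
    convert h2 using 1
    · rfl
    · rfl
    · rfl
    · rw [eq_div_iff hρ.ne']; ring
  have hint : IntervalIntegrable (fun τ => Real.exp (ρ * (c - τ))) volume t T := by
    apply Continuous.intervalIntegrable
    fun_prop
  rw [intervalIntegral.integral_eq_sub_of_hasDerivAt hderiv hint]
  ring

/-- The contraction estimate (B.9), in the weighted (Bielecki) norm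
`‖f‖_ρ = max_{(s,t)∈D} e^{−ρ(a−s+b−t)}|f(s,t)|`, for the single-integral operator
`𝐏(ψ,P,Q)(s,t) = p₀(s,t) − ∫_t^{ϑ₂(s)} g(s,τ,ψ,P,Q) dτ`. -/
theorem bielecki_estimate_single_integral_operator
    (n : ℕ) (a b L ρ : ℝ) (ha : 0 < a) (hb : 0 < b) (hL : 0 < L) (hρ : 0 < ρ)
    (ϑ₂ : ℝ → ℝ) (hϑcont : ContinuousOn ϑ₂ (Icc 0 a))
    (hϑmaps : ∀ s ∈ Icc (0:ℝ) a, ϑ₂ s ∈ Icc (0:ℝ) b)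
    (D : Set (ℝ × ℝ))
    (hD : D = {p : ℝ × ℝ | 0 ≤ p.1 ∧ p.1 ≤ a ∧ 0 ≤ p.2 ∧ p.2 ≤ ϑ₂ p.1})
    (g : ℝ × ℝ → EuclideanSpace ℝ (Fin n) → EuclideanSpace ℝ (Fin n) →
        EuclideanSpace ℝ (Fin n) → EuclideanSpace ℝ (Fin n))
    (hgcont : ContinuousOn
      (fun q : (ℝ × ℝ) × EuclideanSpace ℝ (Fin n) × EuclideanSpace ℝ (Fin n) ×
          EuclideanSpace ℝ (Fin n) => g q.1 q.2.1 q.2.2.1 q.2.2.2)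
      (D ×ˢ (univ : Set (EuclideanSpace ℝ (Fin n) × EuclideanSpace ℝ (Fin n) ×
          EuclideanSpace ℝ (Fin n)))))
    (hgLip : ∀ p ∈ D, ∀ Ψ₁ P₁ Q₁ Ψ₂ P₂ Q₂ : EuclideanSpace ℝ (Fin n),
      ‖g p Ψ₁ P₁ Q₁ - g p Ψ₂ P₂ Q₂‖ ≤ L * (‖Ψ₁ - Ψ₂‖ + ‖P₁ - P₂‖ + ‖Q₁ - Q₂‖))
    (p₀ : ℝ × ℝ → EuclideanSpace ℝ (Fin n)) (hp₀ : ContinuousOn p₀ D)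
    (normρ : (ℝ × ℝ → EuclideanSpace ℝ (Fin n)) → ℝ)
    (hnormρ : ∀ f : ℝ × ℝ → EuclideanSpace ℝ (Fin n),
      normρ f = ⨆ q : D, Real.exp (-ρ * (a - (q : ℝ × ℝ).1 + b - (q : ℝ × ℝ).2)) * ‖f q‖)
    (ψ₁ P₁ Q₁ ψ₂ P₂ Q₂ : ℝ × ℝ → EuclideanSpace ℝ (Fin n))
    (h₁ : ContinuousOn ψ₁ D ∧ ContinuousOn P₁ D ∧ ContinuousOn Q₁ D)
    (h₂ : ContinuousOn ψ₂ D ∧ ContinuousOn P₂ D ∧ ContinuousOn Q₂ D) :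
    ∀ p ∈ D,
      Real.exp (-ρ * (a - p.1 + b - p.2)) *
        ‖(p₀ p - ∫ τ in p.2..ϑ₂ p.1, g (p.1, τ) (ψ₁ (p.1, τ)) (P₁ (p.1, τ)) (Q₁ (p.1, τ))) -
          (p₀ p - ∫ τ in p.2..ϑ₂ p.1, g (p.1, τ) (ψ₂ (p.1, τ)) (P₂ (p.1, τ)) (Q₂ (p.1, τ)))‖ ≤
      L * ((1 - Real.exp (-ρ * b)) / ρ) *
        (normρ (ψ₁ - ψ₂) + normρ (P₁ - P₂) + normρ (Q₁ - Q₂)) := by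
  obtain ⟨hψ₁, hP₁, hQ₁⟩ := h₁
  obtain ⟨hψ₂, hP₂, hQ₂⟩ := h₂
  -- D is compact
  have hDcomp : IsCompact D := by
    have hproj : Continuous fun s : ℝ => min (max s 0) a := by fun_prop
    have hmaps : ∀ s : ℝ, min (max s 0) a ∈ Icc (0:ℝ) a := fun s =>
      ⟨le_min (le_max_right _ _) ha.le, min_le_right _ _⟩
    have hθ : Continuous fun s : ℝ => ϑ₂ (min (max s 0) a) :=
      hϑcont.comp_continuous hproj hmaps
    have hDeq : D = {p : ℝ × ℝ | 0 ≤ p.1} ∩ {p | p.1 ≤ a} ∩ {p | 0 ≤ p.2} ∩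
        {p | p.2 ≤ ϑ₂ (min (max p.1 0) a)} := by
      rw [hD]; ext p
      simp only [mem_inter_iff, mem_setOf_eq]
      constructor
      · rintro ⟨h1, h2, h3, h4⟩
        rw [min_eq_left, max_eq_left h1]
        · exact ⟨⟨⟨h1, h2⟩, h3⟩, h4⟩
        · rw [max_eq_left h1]; exact h2
      · rintro ⟨⟨⟨h1, h2⟩, h3⟩, h4⟩
        rw [min_eq_left, max_eq_left h1] at h4
        · exact ⟨h1, h2, h3, h4⟩
        · rw [max_eq_left h1]; exact h2
    have hclosed : IsClosed D := by
      rw [hDeq]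
      exact (((isClosed_le continuous_const continuous_fst).inter
        (isClosed_le continuous_fst continuous_const)).inter
        (isClosed_le continuous_const continuous_snd)).inter
        (isClosed_le continuous_snd (hθ.comp continuous_fst))
    have hsub : D ⊆ Icc (0,0) (a,b) := by
      rw [hD]; rintro ⟨s,t⟩ ⟨h1,h2,h3,h4⟩
      have := hϑmaps s ⟨h1,h2⟩
      exact ⟨⟨h1,h3⟩,⟨h2, h4.trans this.2⟩⟩
    exact isCompact_Icc.of_isClosed_subset hclosed hsub
  -- key pointwise bound by the weighted norm
  have key : ∀ f : ℝ × ℝ → EuclideanSpace ℝ (Fin n), ContinuousOn f D →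
      ∀ q ∈ D, Real.exp (-ρ * (a - q.1 + b - q.2)) * ‖f q‖ ≤ normρ f := by
    intro f hf q hq
    rw [hnormρ]
    have hcont : ContinuousOn
        (fun p : ℝ × ℝ => Real.exp (-ρ * (a - p.1 + b - p.2)) * ‖f p‖) D := by
      apply ContinuousOn.mul _ hf.norm
      fun_prop
    have hbdd : BddAbove (range fun q : D =>
        Real.exp (-ρ * (a - (q : ℝ × ℝ).1 + b - (q : ℝ × ℝ).2)) * ‖f q‖) := by
      refine BddAbove.mono ?_ (hDcomp.image_of_continuousOn hcont).bddAbove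
      rintro x ⟨⟨q, hq⟩, rfl⟩
      exact ⟨q, hq, rfl⟩
    exact le_ciSup hbdd (⟨q, hq⟩ : D)
  have hD0 : ((0:ℝ), (0:ℝ)) ∈ D := by
    rw [hD]
    exact ⟨le_refl _, ha.le, le_refl _, (hϑmaps 0 ⟨le_refl _, ha.le⟩).1⟩
  have hnn : ∀ f : ℝ × ℝ → EuclideanSpace ℝ (Fin n), ContinuousOn f D → 0 ≤ normρ f := by
    intro f hf
    exact le_trans (by positivity) (key f hf ((0:ℝ),(0:ℝ)) hD0)
  have hψc : ContinuousOn (ψ₁ - ψ₂) D := hψ₁.sub hψ₂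
  have hPc : ContinuousOn (P₁ - P₂) D := hP₁.sub hP₂
  have hQc : ContinuousOn (Q₁ - Q₂) D := hQ₁.sub hQ₂
  set N := normρ (ψ₁ - ψ₂) + normρ (P₁ - P₂) + normρ (Q₁ - Q₂) with hNdef
  have hN : 0 ≤ N := by
    have := hnn _ hψc; have := hnn _ hPc; have := hnn _ hQc
    positivity
  -- the pointwise bound on norms, in the convenient form
  have key' : ∀ f : ℝ × ℝ → EuclideanSpace ℝ (Fin n), ContinuousOn f D →
      ∀ q ∈ D, ‖f q‖ ≤ Real.exp (ρ * (a - q.1 + b - q.2)) * normρ f := by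
    intro f hf q hq
    have h1 := key f hf q hq
    have h2 : (0:ℝ) < Real.exp (ρ * (a - q.1 + b - q.2)) := Real.exp_pos _
    have h3 : Real.exp (ρ * (a - q.1 + b - q.2)) *
        (Real.exp (-ρ * (a - q.1 + b - q.2)) * ‖f q‖) = ‖f q‖ := by
      rw [← mul_assoc, ← Real.exp_add,
        show ρ * (a - q.1 + b - q.2) + -ρ * (a - q.1 + b - q.2) = 0 by ring,
        Real.exp_zero, one_mul]
    calc ‖f q‖ = Real.exp (ρ * (a - q.1 + b - q.2)) *
        (Real.exp (-ρ * (a - q.1 + b - q.2)) * ‖f q‖) := h3.symm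
      _ ≤ Real.exp (ρ * (a - q.1 + b - q.2)) * normρ f :=
        mul_le_mul_of_nonneg_left h1 h2.le
  rintro ⟨s, t⟩ hp
  have hp' := hp
  rw [hD] at hp'
  obtain ⟨hs0, hsa, ht0, htT⟩ := hp'
  set T := ϑ₂ s with hTdef
  have htT' : t ≤ T := htT
  have ht0' : (0:ℝ) ≤ t := ht0
  have hTb : T ≤ b := (hϑmaps s ⟨hs0, hsa⟩).2
  set c := a - s + b with hcdef
  -- membership of the vertical segment in D
  have hseg : ∀ τ ∈ Icc t T, ((s, τ) : ℝ × ℝ) ∈ D := by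
    intro τ hτ
    rw [hD]
    exact ⟨hs0, hsa, ht0.trans hτ.1, hτ.2⟩
  -- continuity of composed integrands on [t, T]
  have hcontI : ∀ ψ P Q : ℝ × ℝ → EuclideanSpace ℝ (Fin n),
      ContinuousOn ψ D → ContinuousOn P D → ContinuousOn Q D →
      ContinuousOn (fun τ => g (s, τ) (ψ (s, τ)) (P (s, τ)) (Q (s, τ))) (Icc t T) := by
    intro ψ P Q hψ hP hQ
    have hm : ContinuousOn (fun τ : ℝ => ((s, τ) : ℝ × ℝ)) (Icc t T) :=
      (continuous_const.prodMk continuous_id).continuousOn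
    have hmt : MapsTo (fun τ : ℝ => ((s, τ) : ℝ × ℝ)) (Icc t T) D := hseg
    have hbig : ContinuousOn (fun τ : ℝ =>
        (((s, τ) : ℝ × ℝ), (ψ (s, τ), (P (s, τ), Q (s, τ))))) (Icc t T) :=
      hm.prodMk ((hψ.comp hm hmt).prodMk ((hP.comp hm hmt).prodMk (hQ.comp hm hmt)))
    have hmt2 : MapsTo (fun τ : ℝ =>
        (((s, τ) : ℝ × ℝ), (ψ (s, τ), (P (s, τ), Q (s, τ))))) (Icc t T)
        (D ×ˢ (univ : Set (EuclideanSpace ℝ (Fin n) × EuclideanSpace ℝ (Fin n) ×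
          EuclideanSpace ℝ (Fin n)))) := fun τ hτ => ⟨hseg τ hτ, trivial⟩
    exact hgcont.comp hbig hmt2
  have huIcc : uIcc t T = Icc t T := uIcc_of_le htT
  have hint1 : IntervalIntegrable
      (fun τ => g (s, τ) (ψ₁ (s, τ)) (P₁ (s, τ)) (Q₁ (s, τ))) volume t T := by
    apply ContinuousOn.intervalIntegrable
    rw [huIcc]; exact hcontI _ _ _ hψ₁ hP₁ hQ₁
  have hint2 : IntervalIntegrable
      (fun τ => g (s, τ) (ψ₂ (s, τ)) (P₂ (s, τ)) (Q₂ (s, τ))) volume t T := by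
    apply ContinuousOn.intervalIntegrable
    rw [huIcc]; exact hcontI _ _ _ hψ₂ hP₂ hQ₂
  -- rewrite the difference as a single integral
  have hrw : (p₀ (s, t) - ∫ τ in t..T, g (s, τ) (ψ₁ (s, τ)) (P₁ (s, τ)) (Q₁ (s, τ))) -
      (p₀ (s, t) - ∫ τ in t..T, g (s, τ) (ψ₂ (s, τ)) (P₂ (s, τ)) (Q₂ (s, τ))) =
      -(∫ τ in t..T, (g (s, τ) (ψ₁ (s, τ)) (P₁ (s, τ)) (Q₁ (s, τ)) -
        g (s, τ) (ψ₂ (s, τ)) (P₂ (s, τ)) (Q₂ (s, τ)))) := by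
    rw [intervalIntegral.integral_sub hint1 hint2]
    abel
  -- pointwise bound on the integrand
  have hptw : ∀ τ ∈ Set.uIoc t T,
      ‖g (s, τ) (ψ₁ (s, τ)) (P₁ (s, τ)) (Q₁ (s, τ)) -
        g (s, τ) (ψ₂ (s, τ)) (P₂ (s, τ)) (Q₂ (s, τ))‖ ≤
      L * N * Real.exp (ρ * (c - τ)) := by
    intro τ hτ
    rw [uIoc_of_le htT] at hτ
    have hτ' : τ ∈ Icc t T := ⟨hτ.1.le, hτ.2⟩
    have hqD := hseg τ hτ'
    have h1 := hgLip (s, τ) hqD (ψ₁ (s, τ)) (P₁ (s, τ)) (Q₁ (s, τ))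
      (ψ₂ (s, τ)) (P₂ (s, τ)) (Q₂ (s, τ))
    have e1 := key' _ hψc (s, τ) hqD
    have e2 := key' _ hPc (s, τ) hqD
    have e3 := key' _ hQc (s, τ) hqD
    simp only [Pi.sub_apply] at e1 e2 e3
    have hexp : Real.exp (ρ * (a - (s, τ).1 + b - (s, τ).2)) = Real.exp (ρ * (c - τ)) := by
      simp only [hcdef]
    rw [hexp] at e1 e2 e3
    calc ‖g (s, τ) (ψ₁ (s, τ)) (P₁ (s, τ)) (Q₁ (s, τ)) -
          g (s, τ) (ψ₂ (s, τ)) (P₂ (s, τ)) (Q₂ (s, τ))‖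
        ≤ L * (‖ψ₁ (s, τ) - ψ₂ (s, τ)‖ + ‖P₁ (s, τ) - P₂ (s, τ)‖ +
            ‖Q₁ (s, τ) - Q₂ (s, τ)‖) := h1
      _ ≤ L * (Real.exp (ρ * (c - τ)) * normρ (ψ₁ - ψ₂) +
            Real.exp (ρ * (c - τ)) * normρ (P₁ - P₂) +
            Real.exp (ρ * (c - τ)) * normρ (Q₁ - Q₂)) := by
          apply mul_le_mul_of_nonneg_left _ hL.le
          exact add_le_add (add_le_add e1 e2) e3
      _ = L * N * Real.exp (ρ * (c - τ)) := by rw [hNdef]; ring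
  -- bound the norm of the integral
  have hbnd : ‖∫ τ in t..T, (g (s, τ) (ψ₁ (s, τ)) (P₁ (s, τ)) (Q₁ (s, τ)) -
      g (s, τ) (ψ₂ (s, τ)) (P₂ (s, τ)) (Q₂ (s, τ)))‖ ≤
      L * N * ((Real.exp (ρ * (c - t)) - Real.exp (ρ * (c - T))) / ρ) := by
    have hbint : IntervalIntegrable (fun τ => L * N * Real.exp (ρ * (c - τ))) volume t T := by
      apply Continuous.intervalIntegrable; fun_prop
    have := intervalIntegral.norm_integral_le_of_norm_le
      htT' (Filter.Eventually.of_forall fun τ hτ => hptw τ (by rw [uIoc_of_le htT']; exact hτ)) hbint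
    refine this.trans ?_
    rw [intervalIntegral.integral_const_mul, exp_int' ρ c t T hρ]
  -- put everything together
  simp only
  rw [hrw, norm_neg]
  have hw : Real.exp (-ρ * (a - s + b - t)) = Real.exp (-(ρ * (c - t))) := by
    congr 1; rw [hcdef]; ring
  rw [hw]
  have step1 : Real.exp (-(ρ * (c - t))) *
      ‖∫ τ in t..T, (g (s, τ) (ψ₁ (s, τ)) (P₁ (s, τ)) (Q₁ (s, τ)) -
        g (s, τ) (ψ₂ (s, τ)) (P₂ (s, τ)) (Q₂ (s, τ)))‖ ≤
      Real.exp (-(ρ * (c - t))) *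
        (L * N * ((Real.exp (ρ * (c - t)) - Real.exp (ρ * (c - T))) / ρ)) :=
    mul_le_mul_of_nonneg_left hbnd (Real.exp_pos _).le
  refine step1.trans ?_
  have hid : Real.exp (-(ρ * (c - t))) *
      (L * N * ((Real.exp (ρ * (c - t)) - Real.exp (ρ * (c - T))) / ρ)) =
      L * N * ((1 - Real.exp (ρ * (t - T))) / ρ) := by
    have e1 : Real.exp (-(ρ * (c - t))) * Real.exp (ρ * (c - t)) = 1 := by
      rw [← Real.exp_add, show -(ρ * (c - t)) + ρ * (c - t) = 0 by ring, Real.exp_zero]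
    have e2 : Real.exp (-(ρ * (c - t))) * Real.exp (ρ * (c - T)) =
        Real.exp (ρ * (t - T)) := by
      rw [← Real.exp_add]; congr 1; ring
    have e3 : Real.exp (-(ρ * (c - t))) *
        (Real.exp (ρ * (c - t)) - Real.exp (ρ * (c - T))) =
        1 - Real.exp (ρ * (t - T)) := by rw [mul_sub, e1, e2]
    calc Real.exp (-(ρ * (c - t))) *
        (L * N * ((Real.exp (ρ * (c - t)) - Real.exp (ρ * (c - T))) / ρ)) =
        L * N * ((Real.exp (-(ρ * (c - t))) *
          (Real.exp (ρ * (c - t)) - Real.exp (ρ * (c - T)))) / ρ) := by ring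
      _ = L * N * ((1 - Real.exp (ρ * (t - T))) / ρ) := by rw [e3]
  rw [hid]
  have hfin : (1 - Real.exp (ρ * (t - T))) / ρ ≤ (1 - Real.exp (-ρ * b)) / ρ := by
    have hm : ρ * (T - t) ≤ ρ * b := mul_le_mul_of_nonneg_left (by linarith) hρ.le
    have h1 : Real.exp (-ρ * b) ≤ Real.exp (ρ * (t - T)) :=
      Real.exp_le_exp.2 (by linarith)
    gcongr
  calc L * N * ((1 - Real.exp (ρ * (t - T))) / ρ)
      ≤ L * N * ((1 - Real.exp (-ρ * b)) / ρ) := by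
        apply mul_le_mul_of_nonneg_left hfin (by positivity)
    _ = L * ((1 - Real.exp (-ρ * b)) / ρ) * N := by ring
end

section
/- Let a, b, L > 0, let ϑ₂ : [0,a] → [0,b] be continuous and non-increasing, let D := {(s,t) : 0 ≤ s ≤ a, 0 ≤ t ≤ ϑ₂(s)}, set ϑ₁(t) := sup{s ∈ [0,a] : ϑ₂(s) ≥ t}, and for (s,t) ∈ D set E(s,t) := {(σ,τ) ∈ D : σ ≥ s, τ ≥ t}. Let g : D × ℝⁿ × ℝⁿ × ℝⁿ → ℝⁿ be continuous and satisfy |g(σ,τ,Ψ₁,P₁,Q₁) − g(σ,τ,Ψ₂,P₂,Q₂)| ≤ L(|Ψ₁−Ψ₂| + |P₁−P₂| + |Q₁−Q₂|), let ψ₀ : D → ℝⁿ be continuous with continuous first partial derivatives, and define the combined operator S sending a continuous triple (ψ,P,Q) : D → (ℝⁿ)³ to the triple ( ψ₀ + ∬_{E(·,·)} g(σ,τ,ψ,P,Q) dA, ∂ψ₀/∂s − ∫_·^{ϑ₂(·)} g(·,τ,ψ,P,Q) dτ, ∂ψ₀/∂t − ∫_·^{ϑ₁(·)} g(σ,·,ψ,P,Q)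 dσ ). For ρ > 0 define ‖(ψ,P,Q)‖_ρ := ‖ψ‖_ρ + ‖P‖_ρ + ‖Q‖_ρ, where ‖f‖_ρ := max_{(s,t)∈D} e^{−ρ(a−s+b−t)}|f(s,t)|. Then there exists ρ₀ > 0 such that for every ρ ≥ ρ₀ the operator S is a contraction with respect to ‖·‖_ρ, i.e. there is k < 1 with ‖S(ψ₁,P₁,Q₁) − S(ψ₂,P₂,Q₂)‖_ρ ≤ k ‖(ψ₁−ψ₂, P₁−P₂, Q₁−Q₂)‖_ρ for all continuous triples. -/
open Set MeasureTheory intervalIntegral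

private lemma expInt {ρ : ℝ} (hρ : 0 < ρ) (c : ℝ) {s e : ℝ} (_hse : s ≤ e) :
    ∫ x in s..e, Real.exp (ρ * (c - x)) =
      (Real.exp (ρ * (c - s)) - Real.exp (ρ * (c - e))) / ρ := by
  have key : ∀ x ∈ uIcc s e,
      HasDerivAt (fun y => -(Real.exp (ρ * (c - y)) / ρ)) (Real.exp (ρ * (c - x))) x := by
    intro x _
    have h1 : HasDerivAt (fun y : ℝ => ρ * (c - y)) (-ρ) x := by
      simpa using (((hasDerivAt_id x).const_sub c).const_mul ρ)
    have h3 := (h1.exp.div_const ρ).neg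
    rw [mul_neg, neg_div, neg_neg, mul_div_assoc, div_self hρ.ne', mul_one] at h3
    exact h3
  have hcont : IntervalIntegrable (fun x => Real.exp (ρ * (c - x))) volume s e :=
    (Continuous.intervalIntegrable (by continuity) s e)
  rw [intervalIntegral.integral_eq_sub_of_hasDerivAt key hcont]
  ring

private lemma expInt_le {ρ : ℝ} (hρ : 0 < ρ) (c : ℝ) {s e : ℝ} (hse : s ≤ e) :
    ∫ x in s..e, Real.exp (ρ * (c - x)) ≤ Real.exp (ρ * (c - s)) / ρ := by
  rw [expInt hρ c hse]
  have := (Real.exp_pos (ρ * (c - e))).le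
  gcongr
  linarith

set_option maxHeartbeats 1000000

/-- For `ρ` large enough, the combined operator `S` of the system (B.5) is
a contraction for the weighted (Bielecki) norm
`‖(ψ,P,Q)‖_ρ = ‖ψ‖_ρ + ‖P‖_ρ + ‖Q‖_ρ`, `‖f‖_ρ = max_{(s,t)∈D} e^{−ρ(a−s+b−t)}|f(s,t)|`. -/
theorem combined_operator_contraction
    (n : ℕ) (a b L : ℝ) (ha : 0 < a) (hb : 0 < b) (hL : 0 < L)
    (ϑ₂ : ℝ → ℝ) (hϑcont : ContinuousOn ϑ₂ (Icc 0 a))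
    (hϑanti : AntitoneOn ϑ₂ (Icc 0 a))
    (hϑmaps : ∀ s ∈ Icc (0:ℝ) a, ϑ₂ s ∈ Icc (0:ℝ) b)
    (D : Set (ℝ × ℝ))
    (hD : D = {p : ℝ × ℝ | 0 ≤ p.1 ∧ p.1 ≤ a ∧ 0 ≤ p.2 ∧ p.2 ≤ ϑ₂ p.1})
    (ϑ₁ : ℝ → ℝ)
    (hϑ₁ : ∀ t : ℝ, ϑ₁ t = sSup {s : ℝ | s ∈ Icc (0:ℝ) a ∧ t ≤ ϑ₂ s})
    (g : ℝ × ℝ → EuclideanSpace ℝ (Fin n) → EuclideanSpace ℝ (Fin n) →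
        EuclideanSpace ℝ (Fin n) → EuclideanSpace ℝ (Fin n))
    (hgcont : ContinuousOn
      (fun q : (ℝ × ℝ) × EuclideanSpace ℝ (Fin n) × EuclideanSpace ℝ (Fin n) ×
          EuclideanSpace ℝ (Fin n) => g q.1 q.2.1 q.2.2.1 q.2.2.2)
      (D ×ˢ (univ : Set (EuclideanSpace ℝ (Fin n) × EuclideanSpace ℝ (Fin n) ×
          EuclideanSpace ℝ (Fin n)))))
    (hgLip : ∀ p ∈ D, ∀ Ψ₁ P₁ Q₁ Ψ₂ P₂ Q₂ : EuclideanSpace ℝ (Fin n),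
      ‖g p Ψ₁ P₁ Q₁ - g p Ψ₂ P₂ Q₂‖ ≤ L * (‖Ψ₁ - Ψ₂‖ + ‖P₁ - P₂‖ + ‖Q₁ - Q₂‖))
    -- `ψ₀` is continuous on `D` with continuous first partial derivatives `ψ₀s`, `ψ₀t`
    (ψ₀ ψ₀s ψ₀t : ℝ × ℝ → EuclideanSpace ℝ (Fin n))
    (hψ₀ : ContinuousOn ψ₀ D) (hψ₀s : ContinuousOn ψ₀s D) (hψ₀t : ContinuousOn ψ₀t D)
    (hψ₀ds : ∀ p ∈ D, HasDerivWithinAt (fun σ => ψ₀ (σ, p.2)) (ψ₀s p)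
      {σ : ℝ | (σ, p.2) ∈ D} p.1)
    (hψ₀dt : ∀ p ∈ D, HasDerivWithinAt (fun τ => ψ₀ (p.1, τ)) (ψ₀t p)
      {τ : ℝ | (p.1, τ) ∈ D} p.2)
    -- the combined operator `S`
    (S : ((ℝ × ℝ → EuclideanSpace ℝ (Fin n)) × (ℝ × ℝ → EuclideanSpace ℝ (Fin n)) ×
          (ℝ × ℝ → EuclideanSpace ℝ (Fin n))) →
        ((ℝ × ℝ → EuclideanSpace ℝ (Fin n)) × (ℝ × ℝ → EuclideanSpace ℝ (Fin n)) ×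
          (ℝ × ℝ → EuclideanSpace ℝ (Fin n))))
    (hS : ∀ T, S T =
      (fun p : ℝ × ℝ => ψ₀ p +
          ∫ q in {q ∈ D | p.1 ≤ q.1 ∧ p.2 ≤ q.2}, g q (T.1 q) (T.2.1 q) (T.2.2 q),
        fun p : ℝ × ℝ => ψ₀s p -
          ∫ τ in p.2..ϑ₂ p.1, g (p.1, τ) (T.1 (p.1, τ)) (T.2.1 (p.1, τ)) (T.2.2 (p.1, τ)),
        fun p : ℝ × ℝ => ψ₀t p -
          ∫ σ in p.1..ϑ₁ p.2, g (σ, p.2) (T.1 (σ, p.2)) (T.2.1 (σ, p.2)) (T.2.2 (σ, p.2))))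
    -- the weighted norm ‖·‖_ρ
    (normρ : ℝ → (ℝ × ℝ → EuclideanSpace ℝ (Fin n)) → ℝ)
    (hnormρ : ∀ (ρ : ℝ) (f : ℝ × ℝ → EuclideanSpace ℝ (Fin n)),
      normρ ρ f = ⨆ q : D, Real.exp (-ρ * (a - (q : ℝ × ℝ).1 + b - (q : ℝ × ℝ).2)) * ‖f q‖) :
    ∃ ρ₀ : ℝ, 0 < ρ₀ ∧ ∀ ρ : ℝ, ρ₀ ≤ ρ →
      ∃ k : ℝ, 0 ≤ k ∧ k < 1 ∧
        ∀ T₁ T₂ : (ℝ × ℝ → EuclideanSpace ℝ (Fin n)) × (ℝ × ℝ → EuclideanSpace ℝ (Fin n)) ×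
            (ℝ × ℝ → EuclideanSpace ℝ (Fin n)),
          ContinuousOn T₁.1 D → ContinuousOn T₁.2.1 D → ContinuousOn T₁.2.2 D →
          ContinuousOn T₂.1 D → ContinuousOn T₂.2.1 D → ContinuousOn T₂.2.2 D →
          normρ ρ ((S T₁).1 - (S T₂).1) + normρ ρ ((S T₁).2.1 - (S T₂).2.1) +
              normρ ρ ((S T₁).2.2 - (S T₂).2.2) ≤
            k * (normρ ρ (T₁.1 - T₂.1) + normρ ρ (T₁.2.1 - T₂.2.1) +
              normρ ρ (T₁.2.2 - T₂.2.2)) := by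
  subst hD
  set D : Set (ℝ × ℝ) := {p : ℝ × ℝ | 0 ≤ p.1 ∧ p.1 ≤ a ∧ 0 ≤ p.2 ∧ p.2 ≤ ϑ₂ p.1} with hDdef
  -- basic facts about D
  have hDsub : D ⊆ Icc 0 a ×ˢ Icc 0 b := by
    rintro p ⟨h1, h2, h3, h4⟩
    exact ⟨⟨h1, h2⟩, ⟨h3, h4.trans (hϑmaps p.1 ⟨h1, h2⟩).2⟩⟩
  have hDclosed : IsClosed D := by
    have heq : D = (Icc 0 a ×ˢ Icc 0 b) ∩
        (fun p : ℝ × ℝ => ϑ₂ p.1 - p.2) ⁻¹' Ici 0 := by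
      ext p
      constructor
      · rintro ⟨h1, h2, h3, h4⟩
        exact ⟨hDsub ⟨h1, h2, h3, h4⟩, by simp [mem_preimage]; linarith⟩
      · rintro ⟨⟨⟨h1, h2⟩, ⟨h3, _⟩⟩, h5⟩
        simp only [mem_preimage, mem_Ici] at h5
        exact ⟨h1, h2, h3, by linarith⟩
    rw [heq]
    apply ContinuousOn.preimage_isClosed_of_isClosed
    · exact (hϑcont.comp continuous_fst.continuousOn
        (fun p hp => hp.1)).sub continuous_snd.continuousOn
    · exact (isClosed_Icc.prod isClosed_Icc)
    · exact isClosed_Ici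
  have hDcomp : IsCompact D :=
    (isCompact_Icc.prod isCompact_Icc).of_isClosed_subset hDclosed hDsub
  have hD00 : ((0:ℝ), (0:ℝ)) ∈ D :=
    ⟨le_refl _, ha.le, le_refl _, (hϑmaps 0 ⟨le_refl _, ha.le⟩).1⟩
  haveI : Nonempty D := ⟨⟨(0, 0), hD00⟩⟩
  have hnonneg : ∀ (ρ : ℝ) (f : ℝ × ℝ → EuclideanSpace ℝ (Fin n)), 0 ≤ normρ ρ f := by
    intro ρ f
    rw [hnormρ]
    exact Real.iSup_nonneg fun q => mul_nonneg (Real.exp_nonneg _) (norm_nonneg _)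
  -- pointwise bound from the weighted norm
  have hptle : ∀ (ρ : ℝ), 0 < ρ → ∀ f : ℝ × ℝ → EuclideanSpace ℝ (Fin n),
      ContinuousOn f D → ∀ q ∈ D,
      ‖f q‖ ≤ Real.exp (ρ * (a - q.1 + b - q.2)) * normρ ρ f := by
    intro ρ hρ f hf q hq
    obtain ⟨C, hC⟩ := hDcomp.exists_bound_of_continuousOn hf
    have hbdd : BddAbove (range fun q : D =>
        Real.exp (-ρ * (a - (q : ℝ × ℝ).1 + b - (q : ℝ × ℝ).2)) * ‖f q‖) := by
      refine ⟨max C 0, ?_⟩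
      rintro x ⟨⟨q', hq'⟩, rfl⟩
      have h1 : Real.exp (-ρ * (a - q'.1 + b - q'.2)) ≤ 1 := by
        rw [← Real.exp_zero]
        apply Real.exp_le_exp.mpr
        obtain ⟨⟨hq1, hq2⟩, hq3, hq4⟩ := hDsub hq'
        nlinarith
      calc Real.exp (-ρ * (a - q'.1 + b - q'.2)) * ‖f q'‖
          ≤ 1 * ‖f q'‖ := mul_le_mul_of_nonneg_right h1 (norm_nonneg _)
        _ = ‖f q'‖ := one_mul _
        _ ≤ C := hC q' hq'
        _ ≤ max C 0 := le_max_left _ _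
    have hle := le_ciSup hbdd (⟨q, hq⟩ : D)
    rw [← hnormρ ρ f] at hle
    have hx := mul_le_mul_of_nonneg_left hle
      (Real.exp_nonneg (ρ * (a - q.1 + b - q.2)))
    calc ‖f q‖ = Real.exp (ρ * (a - q.1 + b - q.2)) *
          (Real.exp (-ρ * (a - q.1 + b - q.2)) * ‖f q‖) := by
          rw [← mul_assoc, ← Real.exp_add,
            show ρ * (a - q.1 + b - q.2) + -ρ * (a - q.1 + b - q.2) = 0 by ring,
            Real.exp_zero, one_mul]
      _ ≤ _ := hx
  -- weight cancellation
  have hwc : ∀ (X v C : ℝ), ∀ ρ' : ℝ, v ≤ Real.exp (ρ' * X) * C →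
      Real.exp (-ρ' * X) * v ≤ C := by
    intro X v C ρ' h
    calc Real.exp (-ρ' * X) * v
        ≤ Real.exp (-ρ' * X) * (Real.exp (ρ' * X) * C) :=
          mul_le_mul_of_nonneg_left h (Real.exp_nonneg _)
      _ = C := by
        rw [← mul_assoc, ← Real.exp_add, show -ρ' * X + ρ' * X = 0 by ring,
          Real.exp_zero, one_mul]
  refine ⟨max 1 (4 * L), lt_of_lt_of_le one_pos (le_max_left _ _), ?_⟩
  intro ρ hρ
  have hρ1 : (1:ℝ) ≤ ρ := le_trans (le_max_left _ _) hρ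
  have hρ4L : 4 * L ≤ ρ := le_trans (le_max_right _ _) hρ
  have hρpos : 0 < ρ := lt_of_lt_of_le one_pos hρ1
  refine ⟨3 * L / ρ, by positivity, ?_, ?_⟩
  · rw [div_lt_one hρpos]; linarith
  intro T₁ T₂ h11 h12 h13 h21 h22 h23
  set MM := normρ ρ (T₁.1 - T₂.1) + normρ ρ (T₁.2.1 - T₂.2.1) +
      normρ ρ (T₁.2.2 - T₂.2.2) with hMM
  have hMMnn : 0 ≤ MM :=
    add_nonneg (add_nonneg (hnonneg _ _) (hnonneg _ _)) (hnonneg _ _)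
  set G₁ : ℝ × ℝ → EuclideanSpace ℝ (Fin n) :=
    fun q => g q (T₁.1 q) (T₁.2.1 q) (T₁.2.2 q) with hG₁def
  set G₂ : ℝ × ℝ → EuclideanSpace ℝ (Fin n) :=
    fun q => g q (T₂.1 q) (T₂.2.1 q) (T₂.2.2 q) with hG₂def
  have hG₁cont : ContinuousOn G₁ D := by
    apply hgcont.comp (continuousOn_id.prodMk (h11.prodMk (h12.prodMk h13)))
    intro q hq; exact ⟨hq, mem_univ _⟩
  have hG₂cont : ContinuousOn G₂ D := by
    apply hgcont.comp (continuousOn_id.prodMk (h21.prodMk (h22.prodMk h23)))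
    intro q hq; exact ⟨hq, mem_univ _⟩
  have hGd : ∀ q ∈ D, ‖G₁ q - G₂ q‖ ≤
      L * MM * Real.exp (ρ * (a - q.1)) * Real.exp (ρ * (b - q.2)) := by
    intro q hq
    have h0 := hgLip q hq (T₁.1 q) (T₁.2.1 q) (T₁.2.2 q) (T₂.1 q) (T₂.2.1 q) (T₂.2.2 q)
    have hu := hptle ρ hρpos (T₁.1 - T₂.1) (h11.sub h21) q hq
    have hv := hptle ρ hρpos (T₁.2.1 - T₂.2.1) (h12.sub h22) q hq
    have hw := hptle ρ hρpos (T₁.2.2 - T₂.2.2) (h13.sub h23) q hq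
    simp only [Pi.sub_apply] at hu hv hw
    have hX : Real.exp (ρ * (a - q.1 + b - q.2)) =
        Real.exp (ρ * (a - q.1)) * Real.exp (ρ * (b - q.2)) := by
      rw [← Real.exp_add]; ring_nf
    calc ‖G₁ q - G₂ q‖
        ≤ L * (‖T₁.1 q - T₂.1 q‖ + ‖T₁.2.1 q - T₂.2.1 q‖ + ‖T₁.2.2 q - T₂.2.2 q‖) := h0
      _ ≤ L * (Real.exp (ρ * (a - q.1 + b - q.2)) * normρ ρ (T₁.1 - T₂.1) +
            Real.exp (ρ * (a - q.1 + b - q.2)) * normρ ρ (T₁.2.1 - T₂.2.1) +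
            Real.exp (ρ * (a - q.1 + b - q.2)) * normρ ρ (T₁.2.2 - T₂.2.2)) := by
          apply mul_le_mul_of_nonneg_left _ hL.le
          exact add_le_add (add_le_add hu hv) hw
      _ = L * MM * Real.exp (ρ * (a - q.1 + b - q.2)) := by rw [hMM]; ring
      _ = L * MM * Real.exp (ρ * (a - q.1)) * Real.exp (ρ * (b - q.2)) := by
          rw [hX]; ring
  -- Claim 1: the double-integral component
  have claim1 : normρ ρ ((S T₁).1 - (S T₂).1) ≤ L * MM / (ρ * ρ) := by
    rw [hnormρ]
    apply ciSup_le
    rintro ⟨p, hp⟩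
    obtain ⟨hp1, hp2, hp3, hp4⟩ := hp
    have hp5 : p.2 ≤ b := hp4.trans (hϑmaps p.1 ⟨hp1, hp2⟩).2
    apply hwc
    simp only [hS, Pi.sub_apply]
    have hkey : ψ₀ p + (∫ q in {q ∈ D | p.1 ≤ q.1 ∧ p.2 ≤ q.2}, G₁ q) -
        (ψ₀ p + ∫ q in {q ∈ D | p.1 ≤ q.1 ∧ p.2 ≤ q.2}, G₂ q) =
        (∫ q in {q ∈ D | p.1 ≤ q.1 ∧ p.2 ≤ q.2}, G₁ q) -
        (∫ q in {q ∈ D | p.1 ≤ q.1 ∧ p.2 ≤ q.2}, G₂ q) := by abel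
    rw [hkey]
    set Ep : Set (ℝ × ℝ) := {q ∈ D | p.1 ≤ q.1 ∧ p.2 ≤ q.2} with hEp
    have hEsub : Ep ⊆ D := sep_subset _ _
    have hEclosed : IsClosed Ep := by
      have : Ep = D ∩ ({q : ℝ × ℝ | p.1 ≤ q.1} ∩ {q : ℝ × ℝ | p.2 ≤ q.2}) := by
        ext q; simp only [hEp, mem_setOf_eq, mem_inter_iff]
        try tauto
      rw [this]
      exact hDclosed.inter ((isClosed_le continuous_const continuous_fst).inter
        (isClosed_le continuous_const continuous_snd))
    have hEcomp : IsCompact Ep := hDcomp.of_isClosed_subset hEclosed hEsub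
    have hi1 : IntegrableOn G₁ Ep := (hG₁cont.mono hEsub).integrableOn_compact hEcomp
    have hi2 : IntegrableOn G₂ Ep := (hG₂cont.mono hEsub).integrableOn_compact hEcomp
    have hRsub : Ep ⊆ Icc p.1 a ×ˢ Icc p.2 b := by
      rintro q ⟨hqD, hq1, hq2⟩
      obtain ⟨hd1, hd2, hd3, hd4⟩ := hqD
      exact ⟨⟨hq1, hd2⟩, ⟨hq2, hd4.trans (hϑmaps q.1 ⟨hd1, hd2⟩).2⟩⟩
    have hBintR : IntegrableOn
        (fun q : ℝ × ℝ => L * MM * Real.exp (ρ * (a - q.1)) * Real.exp (ρ * (b - q.2)))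
        (Icc p.1 a ×ˢ Icc p.2 b) := by
      have hcB : Continuous (fun q : ℝ × ℝ =>
          L * MM * Real.exp (ρ * (a - q.1)) * Real.exp (ρ * (b - q.2))) :=
        (continuous_const.mul ((Real.continuous_exp.comp
          (continuous_const.mul (continuous_const.sub continuous_fst))))).mul
          (Real.continuous_exp.comp (continuous_const.mul (continuous_const.sub continuous_snd)))
      exact hcB.continuousOn.integrableOn_compact (isCompact_Icc.prod isCompact_Icc)
    have hBintE : IntegrableOn
        (fun q : ℝ × ℝ => L * MM * Real.exp (ρ * (a - q.1)) * Real.exp (ρ * (b - q.2)))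
        Ep := hBintR.mono_set hRsub
    have hIx : (∫ x in Icc p.1 a, L * MM * Real.exp (ρ * (a - x))) ≤
        L * MM * (Real.exp (ρ * (a - p.1)) / ρ) := by
      rw [integral_Icc_eq_integral_Ioc, ← intervalIntegral.integral_of_le hp2,
        intervalIntegral.integral_const_mul]
      exact mul_le_mul_of_nonneg_left (expInt_le hρpos a hp2) (by positivity)
    have hIy : (∫ y in Icc p.2 b, Real.exp (ρ * (b - y))) ≤ Real.exp (ρ * (b - p.2)) / ρ := by
      rw [integral_Icc_eq_integral_Ioc, ← intervalIntegral.integral_of_le hp5]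
      exact expInt_le hρpos b hp5
    have hIynn : 0 ≤ ∫ y in Icc p.2 b, Real.exp (ρ * (b - y)) :=
      setIntegral_nonneg measurableSet_Icc fun y _ => Real.exp_nonneg _
    calc ‖(∫ q in Ep, G₁ q) - ∫ q in Ep, G₂ q‖
        = ‖∫ q in Ep, (G₁ q - G₂ q)‖ := by rw [integral_sub hi1 hi2]
      _ ≤ ∫ q in Ep, ‖G₁ q - G₂ q‖ := norm_integral_le_integral_norm _
      _ ≤ ∫ q in Ep, L * MM * Real.exp (ρ * (a - q.1)) * Real.exp (ρ * (b - q.2)) := by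
          apply setIntegral_mono_on ((hi1.sub hi2).norm) hBintE hEclosed.measurableSet
          intro q hq
          exact hGd q (hEsub hq)
      _ ≤ ∫ q in Icc p.1 a ×ˢ Icc p.2 b,
            L * MM * Real.exp (ρ * (a - q.1)) * Real.exp (ρ * (b - q.2)) := by
          apply setIntegral_mono_set hBintR
            (ae_of_all _ fun q => by positivity)
            (HasSubset.Subset.eventuallyLE hRsub)
      _ = (∫ x in Icc p.1 a, L * MM * Real.exp (ρ * (a - x))) *
            (∫ y in Icc p.2 b, Real.exp (ρ * (b - y))) := by
          rw [Measure.volume_eq_prod]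
          exact setIntegral_prod_mul (fun x => L * MM * Real.exp (ρ * (a - x)))
            (fun y => Real.exp (ρ * (b - y))) _ _
      _ ≤ (L * MM * (Real.exp (ρ * (a - p.1)) / ρ)) * (Real.exp (ρ * (b - p.2)) / ρ) := by
          apply mul_le_mul hIx hIy hIynn (by positivity)
      _ ≤ Real.exp (ρ * (a - p.1 + b - p.2)) * (L * MM / (ρ * ρ)) := by
          rw [show ρ * (a - p.1 + b - p.2) = ρ * (a - p.1) + ρ * (b - p.2) by ring,
            Real.exp_add]
          apply le_of_eq; ring
  -- Claim 2: the vertical line-integral component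
  have claim2 : normρ ρ ((S T₁).2.1 - (S T₂).2.1) ≤ L * MM / ρ := by
    rw [hnormρ]
    apply ciSup_le
    rintro ⟨p, hp⟩
    obtain ⟨hp1, hp2, hp3, hp4⟩ := hp
    apply hwc
    simp only [hS, Pi.sub_apply]
    have hseg : ∀ τ ∈ Icc p.2 (ϑ₂ p.1), (p.1, τ) ∈ D :=
      fun τ hτ => ⟨hp1, hp2, hp3.trans hτ.1, hτ.2⟩
    have hc1 : ContinuousOn (fun τ => G₁ (p.1, τ)) (Icc p.2 (ϑ₂ p.1)) :=
      hG₁cont.comp (continuous_const.prodMk continuous_id).continuousOn hseg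
    have hc2 : ContinuousOn (fun τ => G₂ (p.1, τ)) (Icc p.2 (ϑ₂ p.1)) :=
      hG₂cont.comp (continuous_const.prodMk continuous_id).continuousOn hseg
    have hi1 : IntervalIntegrable (fun τ => G₁ (p.1, τ)) volume p.2 (ϑ₂ p.1) :=
      hc1.intervalIntegrable_of_Icc hp4
    have hi2 : IntervalIntegrable (fun τ => G₂ (p.1, τ)) volume p.2 (ϑ₂ p.1) :=
      hc2.intervalIntegrable_of_Icc hp4
    have hkey : (ψ₀s p - ∫ τ in p.2..ϑ₂ p.1, G₁ (p.1, τ)) -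
        (ψ₀s p - ∫ τ in p.2..ϑ₂ p.1, G₂ (p.1, τ)) =
        -((∫ τ in p.2..ϑ₂ p.1, G₁ (p.1, τ)) - ∫ τ in p.2..ϑ₂ p.1, G₂ (p.1, τ)) := by abel
    rw [hkey, norm_neg]
    have hiBd : IntervalIntegrable
        (fun τ => L * MM * Real.exp (ρ * (a - p.1)) * Real.exp (ρ * (b - τ)))
        volume p.2 (ϑ₂ p.1) :=
      (continuous_const.mul (Real.continuous_exp.comp
        (continuous_const.mul (continuous_const.sub continuous_id)))).intervalIntegrable _ _
    calc ‖(∫ τ in p.2..ϑ₂ p.1, G₁ (p.1, τ)) - ∫ τ in p.2..ϑ₂ p.1, G₂ (p.1, τ)‖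
        = ‖∫ τ in p.2..ϑ₂ p.1, (G₁ (p.1, τ) - G₂ (p.1, τ))‖ := by
          rw [intervalIntegral.integral_sub hi1 hi2]
      _ ≤ ∫ τ in p.2..ϑ₂ p.1, ‖G₁ (p.1, τ) - G₂ (p.1, τ)‖ :=
          intervalIntegral.norm_integral_le_integral_norm hp4
      _ ≤ ∫ τ in p.2..ϑ₂ p.1,
            L * MM * Real.exp (ρ * (a - p.1)) * Real.exp (ρ * (b - τ)) := by
          apply intervalIntegral.integral_mono_on hp4 ((hi1.sub hi2).norm) hiBd
          intro τ hτ
          exact hGd (p.1, τ) (hseg τ hτ)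
      _ = L * MM * Real.exp (ρ * (a - p.1)) * ∫ τ in p.2..ϑ₂ p.1, Real.exp (ρ * (b - τ)) :=
          intervalIntegral.integral_const_mul _ _
      _ ≤ L * MM * Real.exp (ρ * (a - p.1)) * (Real.exp (ρ * (b - p.2)) / ρ) :=
          mul_le_mul_of_nonneg_left (expInt_le hρpos b hp4) (by positivity)
      _ ≤ Real.exp (ρ * (a - p.1 + b - p.2)) * (L * MM / ρ) := by
          rw [show ρ * (a - p.1 + b - p.2) = ρ * (a - p.1) + ρ * (b - p.2) by ring,
            Real.exp_add]
          apply le_of_eq; ring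
  -- Claim 3: the horizontal line-integral component
  have claim3 : normρ ρ ((S T₁).2.2 - (S T₂).2.2) ≤ L * MM / ρ := by
    rw [hnormρ]
    apply ciSup_le
    rintro ⟨p, hp⟩
    obtain ⟨hp1, hp2, hp3, hp4⟩ := hp
    -- facts about ϑ₁ p.2
    have hAset : {s' : ℝ | s' ∈ Icc (0:ℝ) a ∧ p.2 ≤ ϑ₂ s'} =
        Icc (0:ℝ) a ∩ ϑ₂ ⁻¹' Ici p.2 := rfl
    have hAne : p.1 ∈ {s' : ℝ | s' ∈ Icc (0:ℝ) a ∧ p.2 ≤ ϑ₂ s'} := ⟨⟨hp1, hp2⟩, hp4⟩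
    have hAbdd : BddAbove {s' : ℝ | s' ∈ Icc (0:ℝ) a ∧ p.2 ≤ ϑ₂ s'} :=
      ⟨a, fun x hx => hx.1.2⟩
    have hAclosed : IsClosed {s' : ℝ | s' ∈ Icc (0:ℝ) a ∧ p.2 ≤ ϑ₂ s'} := by
      rw [hAset]
      exact hϑcont.preimage_isClosed_of_isClosed isClosed_Icc isClosed_Ici
    have hsupmem := hAclosed.csSup_mem ⟨p.1, hAne⟩ hAbdd
    rw [← hϑ₁ p.2] at hsupmem
    obtain ⟨⟨hϑ1a, hϑ1b⟩, hϑ1c⟩ := hsupmem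
    have hple : p.1 ≤ ϑ₁ p.2 := by
      rw [hϑ₁ p.2]; exact le_csSup hAbdd hAne
    have hseg : ∀ σ ∈ Icc p.1 (ϑ₁ p.2), (σ, p.2) ∈ D := by
      intro σ hσ
      refine ⟨hp1.trans hσ.1, hσ.2.trans hϑ1b, hp3, ?_⟩
      exact hϑ1c.trans (hϑanti ⟨hp1.trans hσ.1, hσ.2.trans hϑ1b⟩ ⟨hϑ1a, hϑ1b⟩ hσ.2)
    apply hwc
    simp only [hS, Pi.sub_apply]
    have hc1 : ContinuousOn (fun σ => G₁ (σ, p.2)) (Icc p.1 (ϑ₁ p.2)) :=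
      hG₁cont.comp (continuous_id.prodMk continuous_const).continuousOn hseg
    have hc2 : ContinuousOn (fun σ => G₂ (σ, p.2)) (Icc p.1 (ϑ₁ p.2)) :=
      hG₂cont.comp (continuous_id.prodMk continuous_const).continuousOn hseg
    have hi1 : IntervalIntegrable (fun σ => G₁ (σ, p.2)) volume p.1 (ϑ₁ p.2) :=
      hc1.intervalIntegrable_of_Icc hple
    have hi2 : IntervalIntegrable (fun σ => G₂ (σ, p.2)) volume p.1 (ϑ₁ p.2) :=
      hc2.intervalIntegrable_of_Icc hple
    have hkey : (ψ₀t p - ∫ σ in p.1..ϑ₁ p.2, G₁ (σ, p.2)) -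
        (ψ₀t p - ∫ σ in p.1..ϑ₁ p.2, G₂ (σ, p.2)) =
        -((∫ σ in p.1..ϑ₁ p.2, G₁ (σ, p.2)) - ∫ σ in p.1..ϑ₁ p.2, G₂ (σ, p.2)) := by abel
    rw [hkey, norm_neg]
    have hiBd : IntervalIntegrable
        (fun σ => L * MM * Real.exp (ρ * (b - p.2)) * Real.exp (ρ * (a - σ)))
        volume p.1 (ϑ₁ p.2) :=
      (continuous_const.mul (Real.continuous_exp.comp
        (continuous_const.mul (continuous_const.sub continuous_id)))).intervalIntegrable _ _
    calc ‖(∫ σ in p.1..ϑ₁ p.2, G₁ (σ, p.2)) - ∫ σ in p.1..ϑ₁ p.2, G₂ (σ, p.2)‖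
        = ‖∫ σ in p.1..ϑ₁ p.2, (G₁ (σ, p.2) - G₂ (σ, p.2))‖ := by
          rw [intervalIntegral.integral_sub hi1 hi2]
      _ ≤ ∫ σ in p.1..ϑ₁ p.2, ‖G₁ (σ, p.2) - G₂ (σ, p.2)‖ :=
          intervalIntegral.norm_integral_le_integral_norm hple
      _ ≤ ∫ σ in p.1..ϑ₁ p.2,
            L * MM * Real.exp (ρ * (b - p.2)) * Real.exp (ρ * (a - σ)) := by
          apply intervalIntegral.integral_mono_on hple ((hi1.sub hi2).norm) hiBd
          intro σ hσ
          calc ‖G₁ (σ, p.2) - G₂ (σ, p.2)‖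
              ≤ L * MM * Real.exp (ρ * (a - σ)) * Real.exp (ρ * (b - p.2)) :=
                hGd (σ, p.2) (hseg σ hσ)
            _ = L * MM * Real.exp (ρ * (b - p.2)) * Real.exp (ρ * (a - σ)) := by ring
      _ = L * MM * Real.exp (ρ * (b - p.2)) * ∫ σ in p.1..ϑ₁ p.2, Real.exp (ρ * (a - σ)) :=
          intervalIntegral.integral_const_mul _ _
      _ ≤ L * MM * Real.exp (ρ * (b - p.2)) * (Real.exp (ρ * (a - p.1)) / ρ) :=
          mul_le_mul_of_nonneg_left (expInt_le hρpos a hple) (by positivity)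
      _ ≤ Real.exp (ρ * (a - p.1 + b - p.2)) * (L * MM / ρ) := by
          rw [show ρ * (a - p.1 + b - p.2) = ρ * (a - p.1) + ρ * (b - p.2) by ring,
            Real.exp_add]
          apply le_of_eq; ring
  -- assemble
  have h5 : L * MM / (ρ * ρ) ≤ L * MM / ρ := by
    rw [div_le_div_iff₀ (by positivity) hρpos]
    nlinarith [mul_nonneg (mul_nonneg hL.le hMMnn) hρpos.le, hρ1]
  calc normρ ρ ((S T₁).1 - (S T₂).1) + normρ ρ ((S T₁).2.1 - (S T₂).2.1) +
        normρ ρ ((S T₁).2.2 - (S T₂).2.2)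
      ≤ L * MM / (ρ * ρ) + L * MM / ρ + L * MM / ρ :=
        add_le_add (add_le_add claim1 claim2) claim3
    _ ≤ L * MM / ρ + L * MM / ρ + L * MM / ρ := by linarith
    _ = 3 * L / ρ * MM := by ring
end

section
/- Let a, b > 0, let ϑ₂ : [0,a] → [0,b] be a C¹ strictly decreasing bijection onto [0,b] with inverse ϑ₁, and let D := {(s,t) : 0 ≤ s ≤ a, 0 ≤ t ≤ ϑ₂(s)}, with E(s,t) := {(σ,τ) ∈ D : σ ≥ s, τ ≥ t}. Let g : D × ℝⁿ × ℝⁿ × ℝⁿ → ℝⁿ be continuous, and let ψ₀ : D → ℝⁿ be continuous with continuous first partial derivatives. Suppose (ψ,P,Q) is a triple of continuous functions D → ℝⁿ satisfying, on D: ψ(s,t) = ψ₀(s,t) + ∬_{E(s,t)} g(σ,τ,ψ(σ,τ),P(σ,τ),Q(σ,τ)) dA(σ,τ); P(s,t) = (∂ψ₀/∂s)(s,t) − ∫_t^{ϑ₂(s)} g(s,τ,ψ(s,τ),P(s,τ),Q(s,τ)) dτ; Q(s,t) = (∂ψ₀/∂t)(s,t) − ∫_s^{ϑ₁(t)} g(σ,t,ψ(σ,t),P(σ,t),Q(σ,t))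 dσ. Then ψ has continuous first partial derivatives on the interior of D, with ∂ψ/∂s = P and ∂ψ/∂t = Q; in particular ψ solves the single integral equation ψ(s,t) = ψ₀(s,t) + ∬_{E(s,t)} g(σ,τ,ψ(σ,τ),(∂ψ/∂σ)(σ,τ),(∂ψ/∂τ)(σ,τ)) dA(σ,τ). -/
open Set MeasureTheory intervalIntegral Filter Topology

section Aux

variable {E : Type*} [NormedAddCommGroup E] [NormedSpace ℝ E] [CompleteSpace E]

lemma fubini_one
    (a b : ℝ) (ϑ₂ ϑ₁ : ℝ → ℝ)
    (hϑcont : ContinuousOn ϑ₂ (Icc 0 a))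
    (hϑanti : StrictAntiOn ϑ₂ (Icc 0 a))
    (hϑmem : ∀ x ∈ Icc (0:ℝ) a, ϑ₂ x ∈ Icc (0:ℝ) b)
    (hinv₂ : ∀ t ∈ Icc (0:ℝ) b, ϑ₂ (ϑ₁ t) = t)
    (hϑ₁maps : ∀ t ∈ Icc (0:ℝ) b, ϑ₁ t ∈ Icc (0:ℝ) a)
    (G : ℝ × ℝ → E) (hG : Continuous G)
    (s t : ℝ) (hs0 : 0 ≤ s) (hsa : s ≤ a) (ht0 : 0 ≤ t) (ht : t ≤ ϑ₂ s) :
    ∫ q in {q : ℝ × ℝ | (0 ≤ q.1 ∧ q.1 ≤ a ∧ 0 ≤ q.2 ∧ q.2 ≤ ϑ₂ q.1) ∧ s ≤ q.1 ∧ t ≤ q.2}, G q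
      = ∫ x in s..ϑ₁ t, ∫ τ in t..ϑ₂ (min a (max 0 x)), G (x, τ) := by
  have hab : ∀ x ∈ Icc (0:ℝ) a, ∀ τ ∈ Icc (0:ℝ) b, (τ ≤ ϑ₂ x ↔ x ≤ ϑ₁ τ) := by
    intro x hx τ hτ
    constructor
    · intro h
      by_contra hlt
      push_neg at hlt
      have h1 := hϑanti (hϑ₁maps τ hτ) hx hlt
      rw [hinv₂ τ hτ] at h1
      exact absurd h (not_le.2 h1)
    · intro h
      have h1 := hϑanti.antitoneOn hx (hϑ₁maps τ hτ) h
      rwa [hinv₂ τ hτ] at h1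
  set c := ϑ₁ t with hc_def
  have htb : t ∈ Icc (0:ℝ) b := ⟨ht0, le_trans ht (hϑmem s ⟨hs0, hsa⟩).2⟩
  have hca : c ∈ Icc (0:ℝ) a := hϑ₁maps t htb
  have hsc : s ≤ c := (hab s ⟨hs0, hsa⟩ t htb).1 ht
  set S := {q : ℝ × ℝ | (0 ≤ q.1 ∧ q.1 ≤ a ∧ 0 ≤ q.2 ∧ q.2 ≤ ϑ₂ q.1) ∧ s ≤ q.1 ∧ t ≤ q.2}
    with hS_def
  have hT : IsCompact (Icc (0:ℝ) a ×ˢ Icc (0:ℝ) b) := isCompact_Icc.prod isCompact_Icc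
  have hTc : IsClosed ((Icc (0:ℝ) a ×ˢ Icc (0:ℝ) b) ∩
      (fun q : ℝ × ℝ => q.2 - ϑ₂ q.1) ⁻¹' Iic 0) := by
    apply ContinuousOn.preimage_isClosed_of_isClosed
    · exact ContinuousOn.sub (continuous_snd.continuousOn)
        (hϑcont.comp continuous_fst.continuousOn (fun q hq => hq.1))
    · exact (isClosed_Icc.prod isClosed_Icc)
    · exact isClosed_Iic
  have hSeq : S = ((Icc (0:ℝ) a ×ˢ Icc (0:ℝ) b) ∩
      (fun q : ℝ × ℝ => q.2 - ϑ₂ q.1) ⁻¹' Iic 0) ∩ (Ici s ×ˢ Ici t) := by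
    ext q
    simp only [hS_def, mem_setOf_eq, mem_inter_iff, mem_prod, mem_Icc, mem_preimage, mem_Iic,
      mem_Ici]
    constructor
    · rintro ⟨⟨h1, h2, h3, h4⟩, h5, h6⟩
      exact ⟨⟨⟨⟨h1, h2⟩, ⟨h3, le_trans h4 (hϑmem q.1 ⟨h1, h2⟩).2⟩⟩, by linarith⟩, h5, h6⟩
    · rintro ⟨⟨⟨⟨h1, h2⟩, ⟨h3, _⟩⟩, h4⟩, h5, h6⟩
      exact ⟨⟨h1, h2, h3, by linarith⟩, h5, h6⟩
  have hSclosed : IsClosed S := by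
    rw [hSeq]; exact hTc.inter ((isClosed_Ici).prod (isClosed_Ici))
  have hScompact : IsCompact S := by
    apply hT.of_isClosed_subset hSclosed
    rw [hSeq]; exact fun q hq => hq.1.1
  have hSmeas : MeasurableSet S := hSclosed.measurableSet
  have hint : IntegrableOn G S := hG.continuousOn.integrableOn_compact hScompact
  have hint' : Integrable (S.indicator G) ((volume : Measure ℝ).prod volume) := by
    rw [← Measure.volume_eq_prod]
    exact (integrable_indicator_iff hSmeas).2 hint
  have hinner : ∀ x : ℝ, (∫ τ, S.indicator G (x, τ)) =
      (Icc s c).indicator (fun x => ∫ τ in t..ϑ₂ (min a (max 0 x)), G (x, τ)) x := by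
    intro x
    by_cases hx : x ∈ Icc s c
    · have hx0a : x ∈ Icc (0:ℝ) a := ⟨le_trans hs0 hx.1, le_trans hx.2 hca.2⟩
      have htx : t ≤ ϑ₂ x := (hab x hx0a t htb).2 hx.2
      have hclamp : min a (max 0 x) = x := by
        rw [max_eq_right hx0a.1, min_eq_right hx0a.2]
      have hsect : ∀ τ : ℝ, S.indicator G (x, τ) =
          (Icc t (ϑ₂ x)).indicator (fun τ => G (x, τ)) τ := by
        intro τ
        by_cases hτ : τ ∈ Icc t (ϑ₂ x)
        · rw [indicator_of_mem hτ, indicator_of_mem]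
          exact ⟨⟨hx0a.1, hx0a.2, le_trans ht0 hτ.1, hτ.2⟩, hx.1, hτ.1⟩
        · rw [indicator_of_notMem hτ, indicator_of_notMem]
          intro hqS
          exact hτ ⟨hqS.2.2, hqS.1.2.2.2⟩
      rw [indicator_of_mem hx]
      simp only [hsect]
      rw [MeasureTheory.integral_indicator measurableSet_Icc, integral_Icc_eq_integral_Ioc,
        ← intervalIntegral.integral_of_le htx, hclamp]
    · rw [indicator_of_notMem hx]
      have : ∀ τ : ℝ, S.indicator G (x, τ) = 0 := by
        intro τ
        apply indicator_of_notMem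
        intro hqS
        apply hx
        obtain ⟨⟨h1, h2, h3, h4⟩, h5, h6⟩ := hqS
        have hτb : τ ∈ Icc (0:ℝ) b := ⟨h3, le_trans h4 (hϑmem x ⟨h1, h2⟩).2⟩
        have hxc : x ≤ c := (hab x ⟨h1, h2⟩ t htb).1 (le_trans h6 h4)
        exact ⟨h5, hxc⟩
      simp only [this, MeasureTheory.integral_zero]
  calc ∫ q in S, G q = ∫ q, S.indicator G q := (MeasureTheory.integral_indicator hSmeas).symm
    _ = ∫ x, ∫ τ, S.indicator G (x, τ) := by
        rw [Measure.volume_eq_prod]; exact integral_prod _ hint'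
    _ = ∫ x, (Icc s c).indicator (fun x => ∫ τ in t..ϑ₂ (min a (max 0 x)), G (x, τ)) x := by
        exact integral_congr_ae (Filter.Eventually.of_forall hinner)
    _ = ∫ x in Icc s c, ∫ τ in t..ϑ₂ (min a (max 0 x)), G (x, τ) :=
        MeasureTheory.integral_indicator measurableSet_Icc
    _ = ∫ x in s..c, ∫ τ in t..ϑ₂ (min a (max 0 x)), G (x, τ) := by
        rw [integral_Icc_eq_integral_Ioc, ← intervalIntegral.integral_of_le hsc]

lemma fubini_two
    (a b : ℝ) (ϑ₂ ϑ₁ : ℝ → ℝ)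
    (hϑ₁cont : ContinuousOn ϑ₁ (Icc 0 b))
    (hϑanti : StrictAntiOn ϑ₂ (Icc 0 a))
    (hϑmem : ∀ x ∈ Icc (0:ℝ) a, ϑ₂ x ∈ Icc (0:ℝ) b)
    (hinv₁ : ∀ s ∈ Icc (0:ℝ) a, ϑ₁ (ϑ₂ s) = s)
    (hinv₂ : ∀ t ∈ Icc (0:ℝ) b, ϑ₂ (ϑ₁ t) = t)
    (hϑ₁maps : ∀ t ∈ Icc (0:ℝ) b, ϑ₁ t ∈ Icc (0:ℝ) a)
    (G : ℝ × ℝ → E) (hG : Continuous G)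
    (s t : ℝ) (hs0 : 0 ≤ s) (hsa : s ≤ a) (ht0 : 0 ≤ t) (ht : t ≤ ϑ₂ s) :
    ∫ q in {q : ℝ × ℝ | (0 ≤ q.1 ∧ q.1 ≤ a ∧ 0 ≤ q.2 ∧ q.2 ≤ ϑ₂ q.1) ∧ s ≤ q.1 ∧ t ≤ q.2}, G q
      = ∫ τ in t..ϑ₂ s, ∫ x in s..ϑ₁ (min b (max 0 τ)), G (x, τ) := by
  have hab : ∀ x ∈ Icc (0:ℝ) a, ∀ τ ∈ Icc (0:ℝ) b, (τ ≤ ϑ₂ x ↔ x ≤ ϑ₁ τ) := by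
    intro x hx τ hτ
    constructor
    · intro h
      by_contra hlt
      push_neg at hlt
      have h1 := hϑanti (hϑ₁maps τ hτ) hx hlt
      rw [hinv₂ τ hτ] at h1
      exact absurd h (not_le.2 h1)
    · intro h
      have h1 := hϑanti.antitoneOn hx (hϑ₁maps τ hτ) h
      rwa [hinv₂ τ hτ] at h1
  have h₁anti : StrictAntiOn ϑ₁ (Icc 0 b) := by
    intro t1 h1 t2 h2 hlt
    by_contra hle
    push_neg at hle
    have := hϑanti.antitoneOn (hϑ₁maps t1 h1) (hϑ₁maps t2 h2) hle
    rw [hinv₂ t1 h1, hinv₂ t2 h2] at this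
    exact absurd hlt (not_lt.2 this)
  have htb : t ∈ Icc (0:ℝ) b := ⟨ht0, le_trans ht (hϑmem s ⟨hs0, hsa⟩).2⟩
  have hst : s ≤ ϑ₁ t := (hab s ⟨hs0, hsa⟩ t htb).1 ht
  have key := fubini_one b a ϑ₁ ϑ₂ hϑ₁cont h₁anti hϑ₁maps hinv₁ hϑmem
    (fun q => G (q.2, q.1)) (hG.comp (continuous_snd.prodMk continuous_fst))
    t s ht0 htb.2 hs0 hst
  have hset : {q : ℝ × ℝ | (0 ≤ q.1 ∧ q.1 ≤ a ∧ 0 ≤ q.2 ∧ q.2 ≤ ϑ₂ q.1) ∧ s ≤ q.1 ∧ t ≤ q.2}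
      = Prod.swap ⁻¹'
        {q : ℝ × ℝ | (0 ≤ q.1 ∧ q.1 ≤ b ∧ 0 ≤ q.2 ∧ q.2 ≤ ϑ₁ q.1) ∧ t ≤ q.1 ∧ s ≤ q.2} := by
    ext q
    simp only [mem_setOf_eq, mem_preimage, Prod.fst_swap, Prod.snd_swap]
    constructor
    · rintro ⟨⟨h1, h2, h3, h4⟩, h5, h6⟩
      have hqb : q.2 ∈ Icc (0:ℝ) b := ⟨h3, le_trans h4 (hϑmem q.1 ⟨h1, h2⟩).2⟩
      exact ⟨⟨hqb.1, hqb.2, h1, (hab q.1 ⟨h1, h2⟩ q.2 hqb).1 h4⟩, h6, h5⟩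
    · rintro ⟨⟨h1, h2, h3, h4⟩, h5, h6⟩
      have hqa : q.1 ∈ Icc (0:ℝ) a := ⟨h3, le_trans h4 (hϑ₁maps q.2 ⟨h1, h2⟩).2⟩
      exact ⟨⟨h3, hqa.2, h1, (hab q.1 hqa q.2 ⟨h1, h2⟩).2 h4⟩, h6, h5⟩
  rw [hset]
  have hswap : ∫ q in Prod.swap ⁻¹'
        {q : ℝ × ℝ | (0 ≤ q.1 ∧ q.1 ≤ b ∧ 0 ≤ q.2 ∧ q.2 ≤ ϑ₁ q.1) ∧ t ≤ q.1 ∧ s ≤ q.2}, G q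
      = ∫ q in {q : ℝ × ℝ | (0 ≤ q.1 ∧ q.1 ≤ b ∧ 0 ≤ q.2 ∧ q.2 ≤ ϑ₁ q.1) ∧ t ≤ q.1 ∧ s ≤ q.2},
        G (q.2, q.1) := by
    rw [Measure.volume_eq_prod ℝ ℝ]
    have := (Measure.measurePreserving_swap (μ := (volume : Measure ℝ))
        (ν := (volume : Measure ℝ))).setIntegral_preimage_emb
      MeasurableEquiv.prodComm.measurableEmbedding (fun q : ℝ × ℝ => G (q.2, q.1))
      {q : ℝ × ℝ | (0 ≤ q.1 ∧ q.1 ≤ b ∧ 0 ≤ q.2 ∧ q.2 ≤ ϑ₁ q.1) ∧ t ≤ q.1 ∧ s ≤ q.2}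
    simpa using this
  rw [hswap, key]

lemma null_graph (a : ℝ) (f : ℝ → ℝ) (hf : ContinuousOn f (Icc 0 a)) :
    volume {q : ℝ × ℝ | q.1 ∈ Icc 0 a ∧ q.2 = f q.1} = 0 := by
  have hclosed : IsClosed {q : ℝ × ℝ | q.1 ∈ Icc 0 a ∧ q.2 = f q.1} := by
    have : {q : ℝ × ℝ | q.1 ∈ Icc 0 a ∧ q.2 = f q.1}
        = (Icc (0:ℝ) a ×ˢ (univ : Set ℝ)) ∩ (fun q : ℝ × ℝ => q.2 - f q.1) ⁻¹' {0} := by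
      ext q
      simp only [mem_setOf_eq, mem_inter_iff, mem_prod, mem_univ, and_true, mem_preimage,
        mem_singleton_iff, sub_eq_zero]
    rw [this]
    apply ContinuousOn.preimage_isClosed_of_isClosed
    · exact ContinuousOn.sub continuous_snd.continuousOn
        (hf.comp continuous_fst.continuousOn (fun q hq => hq.1))
    · exact isClosed_Icc.prod isClosed_univ
    · exact isClosed_singleton
  rw [Measure.volume_eq_prod, Measure.measure_prod_null hclosed.measurableSet]
  refine Filter.Eventually.of_forall fun x => measure_mono_null ?_ (measure_singleton (f x))
  intro τ hτ
  simp only [mem_preimage, mem_setOf_eq] at hτ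
  exact hτ.2

end Aux

/-- Equivalence of the expanded system (B.5) with the single backward
Volterra integral equation (B.1): if `(ψ,P,Q)` solves the system, then `P` and `Q` are the
first partial derivatives of `ψ` in the interior of `D`, and `ψ` solves the single
integral equation. -/
theorem system_solution_gives_partials
    (n : ℕ) (a b : ℝ) (ha : 0 < a) (hb : 0 < b)
    (ϑ₂ ϑ₁ : ℝ → ℝ)
    (hϑC1 : ContDiffOn ℝ 1 ϑ₂ (Icc 0 a))
    (hϑanti : StrictAntiOn ϑ₂ (Icc 0 a))
    (hϑimg : ϑ₂ '' Icc 0 a = Icc 0 b)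
    (hinv₁ : ∀ s ∈ Icc (0:ℝ) a, ϑ₁ (ϑ₂ s) = s)
    (hinv₂ : ∀ t ∈ Icc (0:ℝ) b, ϑ₂ (ϑ₁ t) = t)
    (hϑ₁maps : ∀ t ∈ Icc (0:ℝ) b, ϑ₁ t ∈ Icc (0:ℝ) a)
    (D : Set (ℝ × ℝ))
    (hD : D = {p : ℝ × ℝ | 0 ≤ p.1 ∧ p.1 ≤ a ∧ 0 ≤ p.2 ∧ p.2 ≤ ϑ₂ p.1})
    (g : ℝ × ℝ → EuclideanSpace ℝ (Fin n) → EuclideanSpace ℝ (Fin n) →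
        EuclideanSpace ℝ (Fin n) → EuclideanSpace ℝ (Fin n))
    (hgcont : ContinuousOn
      (fun q : (ℝ × ℝ) × EuclideanSpace ℝ (Fin n) × EuclideanSpace ℝ (Fin n) ×
          EuclideanSpace ℝ (Fin n) => g q.1 q.2.1 q.2.2.1 q.2.2.2)
      (D ×ˢ (univ : Set (EuclideanSpace ℝ (Fin n) × EuclideanSpace ℝ (Fin n) ×
          EuclideanSpace ℝ (Fin n)))))
    -- `ψ₀` is continuous on `D` with continuous first partial derivatives `ψ₀s`, `ψ₀t`
    (ψ₀ ψ₀s ψ₀t : ℝ × ℝ → EuclideanSpace ℝ (Fin n))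
    (hψ₀ : ContinuousOn ψ₀ D) (hψ₀s : ContinuousOn ψ₀s D) (hψ₀t : ContinuousOn ψ₀t D)
    (hψ₀ds : ∀ p ∈ D, HasDerivWithinAt (fun σ => ψ₀ (σ, p.2)) (ψ₀s p)
      {σ : ℝ | (σ, p.2) ∈ D} p.1)
    (hψ₀dt : ∀ p ∈ D, HasDerivWithinAt (fun τ => ψ₀ (p.1, τ)) (ψ₀t p)
      {τ : ℝ | (p.1, τ) ∈ D} p.2)
    (ψ P Q : ℝ × ℝ → EuclideanSpace ℝ (Fin n))
    (hψ : ContinuousOn ψ D) (hP : ContinuousOn P D) (hQ : ContinuousOn Q D)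
    (heq₁ : ∀ p ∈ D,
      ψ p = ψ₀ p + ∫ q in {q ∈ D | p.1 ≤ q.1 ∧ p.2 ≤ q.2}, g q (ψ q) (P q) (Q q))
    (heq₂ : ∀ p ∈ D,
      P p = ψ₀s p -
        ∫ τ in p.2..ϑ₂ p.1, g (p.1, τ) (ψ (p.1, τ)) (P (p.1, τ)) (Q (p.1, τ)))
    (heq₃ : ∀ p ∈ D,
      Q p = ψ₀t p -
        ∫ σ in p.1..ϑ₁ p.2, g (σ, p.2) (ψ (σ, p.2)) (P (σ, p.2)) (Q (σ, p.2))) :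
    (∀ p : ℝ × ℝ, 0 < p.1 → p.1 < a → 0 < p.2 → p.2 < ϑ₂ p.1 →
      HasDerivAt (fun σ => ψ (σ, p.2)) (P p) p.1 ∧
      HasDerivAt (fun τ => ψ (p.1, τ)) (Q p) p.2) ∧
    (∀ p ∈ D,
      ψ p = ψ₀ p + ∫ q in {q ∈ D | p.1 ≤ q.1 ∧ p.2 ≤ q.2},
        g q (ψ q) (deriv (fun σ => ψ (σ, q.2)) q.1) (deriv (fun τ => ψ (q.1, τ)) q.2)) := by
  have hϑcont : ContinuousOn ϑ₂ (Icc 0 a) := hϑC1.continuousOn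
  have hϑmem : ∀ x ∈ Icc (0:ℝ) a, ϑ₂ x ∈ Icc (0:ℝ) b := by
    intro x hx; rw [← hϑimg]; exact mem_image_of_mem _ hx
  have hab : ∀ x ∈ Icc (0:ℝ) a, ∀ τ ∈ Icc (0:ℝ) b, (τ ≤ ϑ₂ x ↔ x ≤ ϑ₁ τ) := by
    intro x hx τ hτ
    constructor
    · intro h
      by_contra hlt
      push_neg at hlt
      have h1 := hϑanti (hϑ₁maps τ hτ) hx hlt
      rw [hinv₂ τ hτ] at h1
      exact absurd h (not_le.2 h1)
    · intro h
      have h1 := hϑanti.antitoneOn hx (hϑ₁maps τ hτ) h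
      rwa [hinv₂ τ hτ] at h1
  -- continuity of the inverse `ϑ₁` on `[0, b]`
  have hϑ₁cont : ContinuousOn ϑ₁ (Icc 0 b) := by
    let e : Icc (0:ℝ) a ≃ Icc (0:ℝ) b :=
      { toFun := fun x => ⟨ϑ₂ x, hϑmem x x.2⟩
        invFun := fun t => ⟨ϑ₁ t, hϑ₁maps t t.2⟩
        left_inv := fun x => Subtype.ext (hinv₁ x x.2)
        right_inv := fun t => Subtype.ext (hinv₂ t t.2) }
    have hce : Continuous e := by
      apply Continuous.subtype_mk
      exact continuousOn_iff_continuous_restrict.1 hϑcont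
    have : CompactSpace (Icc (0:ℝ) a) := isCompact_iff_compactSpace.mp isCompact_Icc
    let h := Continuous.homeoOfEquivCompactToT2 (f := e) hce
    rw [continuousOn_iff_continuous_restrict]
    have he : restrict (Icc (0:ℝ) b) ϑ₁ = fun t => ((h.symm t : Icc (0:ℝ) a) : ℝ) := rfl
    show Continuous (fun t => ((h.symm t : Icc (0:ℝ) a) : ℝ))
    exact continuous_subtype_val.comp h.symm.continuous
  subst hD
  set D : Set (ℝ × ℝ) := {p : ℝ × ℝ | 0 ≤ p.1 ∧ p.1 ≤ a ∧ 0 ≤ p.2 ∧ p.2 ≤ ϑ₂ p.1} with hDdef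
  -- `D` is closed
  have hDclosed : IsClosed D := by
    have hDeq : D = ((Icc (0:ℝ) a ×ˢ Icc (0:ℝ) b) ∩
        (fun q : ℝ × ℝ => q.2 - ϑ₂ q.1) ⁻¹' Iic 0) := by
      ext q
      simp only [hDdef, mem_setOf_eq, mem_inter_iff, mem_prod, mem_Icc, mem_preimage, mem_Iic]
      constructor
      · rintro ⟨h1, h2, h3, h4⟩
        exact ⟨⟨⟨h1, h2⟩, ⟨h3, le_trans h4 (hϑmem q.1 ⟨h1, h2⟩).2⟩⟩, by linarith⟩
      · rintro ⟨⟨⟨h1, h2⟩, ⟨h3, _⟩⟩, h4⟩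
        exact ⟨h1, h2, h3, by linarith⟩
    rw [hDeq]
    apply ContinuousOn.preimage_isClosed_of_isClosed
    · exact ContinuousOn.sub (continuous_snd.continuousOn)
        (hϑcont.comp continuous_fst.continuousOn (fun q hq => hq.1))
    · exact isClosed_Icc.prod isClosed_Icc
    · exact isClosed_Iic
  have hDmeas : MeasurableSet D := hDclosed.measurableSet
  -- the composite integrand, and its continuous extension to the whole plane
  have hGcont : ContinuousOn (fun q : ℝ × ℝ => g q (ψ q) (P q) (Q q)) D := by
    have hmap : MapsTo (fun q : ℝ × ℝ => (q, (ψ q, P q, Q q))) D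
        (D ×ˢ (univ : Set (EuclideanSpace ℝ (Fin n) × EuclideanSpace ℝ (Fin n) ×
          EuclideanSpace ℝ (Fin n)))) := fun q hq => ⟨hq, mem_univ _⟩
    exact hgcont.comp (continuousOn_id.prodMk (hψ.prodMk (hP.prodMk hQ))) hmap
  obtain ⟨Gt, hGtcont, hGteq⟩ : ∃ Gt : ℝ × ℝ → EuclideanSpace ℝ (Fin n),
      Continuous Gt ∧ ∀ q ∈ D, Gt q = g q (ψ q) (P q) (Q q) := by
    obtain ⟨G', hG'⟩ := ContinuousMap.exists_restrict_eq (Y := EuclideanSpace ℝ (Fin n))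
      hDclosed ⟨_, continuousOn_iff_continuous_restrict.1 hGcont⟩
    exact ⟨G', G'.continuous, fun q hq => by
      have := congrFun (congrArg DFunLike.coe hG') ⟨q, hq⟩; simpa using this⟩
  -- measurability of the integration region
  have hSmeas : ∀ p : ℝ × ℝ, MeasurableSet {q | q ∈ D ∧ p.1 ≤ q.1 ∧ p.2 ≤ q.2} := by
    intro p
    have : {q | q ∈ D ∧ p.1 ≤ q.1 ∧ p.2 ≤ q.2} = D ∩ (Ici p.1 ×ˢ Ici p.2) := by
      ext q; simp only [mem_setOf_eq, mem_inter_iff, mem_prod, mem_Ici]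
    rw [this]
    exact hDmeas.inter (measurableSet_Ici.prod measurableSet_Ici)
  -- the two iterated-integral forms of the Volterra equation
  have lemA : ∀ p ∈ D, ψ p = ψ₀ p +
      ∫ x in p.1..ϑ₁ p.2, ∫ τ in p.2..ϑ₂ (min a (max 0 x)), Gt (x, τ) := by
    intro p hp
    obtain ⟨h1, h2, h3, h4⟩ := hp
    rw [heq₁ p ⟨h1, h2, h3, h4⟩]
    congr 1
    rw [setIntegral_congr_fun (hSmeas p) (fun q hq => (hGteq q hq.1).symm)]
    exact fubini_one a b ϑ₂ ϑ₁ hϑcont hϑanti hϑmem hinv₂ hϑ₁maps Gt hGtcont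
      p.1 p.2 h1 h2 h3 h4
  have lemB : ∀ p ∈ D, ψ p = ψ₀ p +
      ∫ τ in p.2..ϑ₂ p.1, ∫ x in p.1..ϑ₁ (min b (max 0 τ)), Gt (x, τ) := by
    intro p hp
    obtain ⟨h1, h2, h3, h4⟩ := hp
    rw [heq₁ p ⟨h1, h2, h3, h4⟩]
    congr 1
    rw [setIntegral_congr_fun (hSmeas p) (fun q hq => (hGteq q hq.1).symm)]
    exact fubini_two a b ϑ₂ ϑ₁ hϑ₁cont hϑanti hϑmem hinv₁ hinv₂ hϑ₁maps Gt hGtcont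
      p.1 p.2 h1 h2 h3 h4
  -- Part 1 : the partial derivatives
  have part1 : ∀ p : ℝ × ℝ, 0 < p.1 → p.1 < a → 0 < p.2 → p.2 < ϑ₂ p.1 →
      HasDerivAt (fun σ => ψ (σ, p.2)) (P p) p.1 ∧
      HasDerivAt (fun τ => ψ (p.1, τ)) (Q p) p.2 := by
    intro p hs0 hsa ht0 ht
    have hpD : p ∈ D := ⟨hs0.le, hsa.le, ht0.le, ht.le⟩
    have hp2b : p.2 ≤ b := le_trans ht.le (hϑmem p.1 ⟨hs0.le, hsa.le⟩).2
    constructor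
    · -- ∂ψ/∂s = P
      set w₁ : ℝ → EuclideanSpace ℝ (Fin n) :=
        fun x => ∫ τ in p.2..ϑ₂ (min a (max 0 x)), Gt (x, τ) with hw₁def
      have hclampcont : Continuous fun x : ℝ => ϑ₂ (min a (max 0 x)) := by
        apply hϑcont.comp_continuous
        · exact continuous_const.min (continuous_const.max continuous_id)
        · intro x; exact ⟨le_min ha.le (le_max_left _ _), min_le_left _ _⟩
      have hw₁cont : Continuous w₁ := by
        apply intervalIntegral.continuous_parametric_intervalIntegral_of_continuous
          (f := fun x τ => Gt (x, τ)) ?_ hclampcont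
        exact hGtcont.comp (continuous_fst.prodMk continuous_snd)
      have hcl : min a (max 0 p.1) = p.1 := by
        rw [max_eq_right hs0.le, min_eq_right hsa.le]
      have hw₁val : w₁ p.1
          = ∫ τ in p.2..ϑ₂ p.1, g (p.1, τ) (ψ (p.1, τ)) (P (p.1, τ)) (Q (p.1, τ)) := by
        rw [hw₁def]
        simp only [hcl]
        apply intervalIntegral.integral_congr
        intro τ hτ
        rw [uIcc_of_le ht.le] at hτ
        exact hGteq (p.1, τ) ⟨hs0.le, hsa.le, le_trans ht0.le hτ.1, hτ.2⟩
      have hPval : P p = ψ₀s p + -w₁ p.1 := by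
        rw [heq₂ p hpD, sub_eq_add_neg, hw₁val]
      have hnhds : {σ : ℝ | (σ, p.2) ∈ D} ∈ 𝓝 p.1 := by
        have hca : ContinuousAt ϑ₂ p.1 := hϑcont.continuousAt (Icc_mem_nhds hs0 hsa)
        have h1 : ϑ₂ ⁻¹' Ioi p.2 ∈ 𝓝 p.1 := hca (Ioi_mem_nhds ht)
        have h2 : Ioo (0:ℝ) a ∈ 𝓝 p.1 := Ioo_mem_nhds hs0 hsa
        refine Filter.mem_of_superset (Filter.inter_mem h2 h1) ?_
        rintro σ ⟨hσ1, hσ2⟩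
        exact ⟨hσ1.1.le, hσ1.2.le, ht0.le, (mem_preimage.1 hσ2).le⟩
      have hψ₀d : HasDerivAt (fun σ => ψ₀ (σ, p.2)) (ψ₀s p) p.1 :=
        (hψ₀ds p hpD).hasDerivAt hnhds
      have hFd : HasDerivAt (fun x => ∫ x' in x..ϑ₁ p.2, w₁ x') (-w₁ p.1) p.1 :=
        intervalIntegral.integral_hasDerivAt_left (hw₁cont.intervalIntegrable _ _)
          (hw₁cont.stronglyMeasurableAtFilter _ _) hw₁cont.continuousAt
      have hEv : (fun σ => ψ (σ, p.2)) =ᶠ[𝓝 p.1]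
          fun σ => ψ₀ (σ, p.2) + ∫ x' in σ..ϑ₁ p.2, w₁ x' := by
        filter_upwards [hnhds] with σ hσ
        exact lemA (σ, p.2) hσ
      rw [hPval]
      exact (hψ₀d.add hFd).congr_of_eventuallyEq hEv
    · -- ∂ψ/∂t = Q
      set w₂ : ℝ → EuclideanSpace ℝ (Fin n) :=
        fun τ => ∫ x in p.1..ϑ₁ (min b (max 0 τ)), Gt (x, τ) with hw₂def
      have hclampcont : Continuous fun τ : ℝ => ϑ₁ (min b (max 0 τ)) := by
        apply hϑ₁cont.comp_continuous
        · exact continuous_const.min (continuous_const.max continuous_id)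
        · intro τ; exact ⟨le_min hb.le (le_max_left _ _), min_le_left _ _⟩
      have hw₂cont : Continuous w₂ := by
        apply intervalIntegral.continuous_parametric_intervalIntegral_of_continuous
          (f := fun τ x => Gt (x, τ)) ?_ hclampcont
        exact hGtcont.comp (continuous_snd.prodMk continuous_fst)
      have hcl : min b (max 0 p.2) = p.2 := by
        rw [max_eq_right ht0.le, min_eq_right hp2b]
      have hp1c : p.1 ≤ ϑ₁ p.2 :=
        (hab p.1 ⟨hs0.le, hsa.le⟩ p.2 ⟨ht0.le, hp2b⟩).1 ht.le
      have hw₂val : w₂ p.2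
          = ∫ σ in p.1..ϑ₁ p.2, g (σ, p.2) (ψ (σ, p.2)) (P (σ, p.2)) (Q (σ, p.2)) := by
        rw [hw₂def]
        simp only [hcl]
        apply intervalIntegral.integral_congr
        intro x hx
        rw [uIcc_of_le hp1c] at hx
        have hx0a : x ∈ Icc (0:ℝ) a :=
          ⟨le_trans hs0.le hx.1, le_trans hx.2 (hϑ₁maps p.2 ⟨ht0.le, hp2b⟩).2⟩
        exact hGteq (x, p.2) ⟨hx0a.1, hx0a.2, ht0.le,
          (hab x hx0a p.2 ⟨ht0.le, hp2b⟩).2 hx.2⟩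
      have hQval : Q p = ψ₀t p + -w₂ p.2 := by
        rw [heq₃ p hpD, sub_eq_add_neg, hw₂val]
      have hnhds : {τ : ℝ | (p.1, τ) ∈ D} ∈ 𝓝 p.2 := by
        refine Filter.mem_of_superset (Ioo_mem_nhds ht0 ht) ?_
        rintro τ hτ
        exact ⟨hs0.le, hsa.le, hτ.1.le, hτ.2.le⟩
      have hψ₀d : HasDerivAt (fun τ => ψ₀ (p.1, τ)) (ψ₀t p) p.2 :=
        (hψ₀dt p hpD).hasDerivAt hnhds
      have hFd : HasDerivAt (fun y => ∫ τ' in y..ϑ₂ p.1, w₂ τ') (-w₂ p.2) p.2 :=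
        intervalIntegral.integral_hasDerivAt_left (hw₂cont.intervalIntegrable _ _)
          (hw₂cont.stronglyMeasurableAtFilter _ _) hw₂cont.continuousAt
      have hEv : (fun τ => ψ (p.1, τ)) =ᶠ[𝓝 p.2]
          fun τ => ψ₀ (p.1, τ) + ∫ τ' in τ..ϑ₂ p.1, w₂ τ' := by
        filter_upwards [hnhds] with τ hτ
        exact lemB (p.1, τ) hτ
      rw [hQval]
      exact (hψ₀d.add hFd).congr_of_eventuallyEq hEv
  refine ⟨part1, ?_⟩
  -- Part 2 : `ψ` solves the single integral equation with its own partial derivatives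
  intro p hp
  rw [heq₁ p hp]
  congr 1
  apply setIntegral_congr_ae (hSmeas p)
  set N : Set (ℝ × ℝ) := (({(0:ℝ)} ×ˢ (univ : Set ℝ)) ∪ ({a} ×ˢ (univ : Set ℝ)) ∪
      ((univ : Set ℝ) ×ˢ {(0:ℝ)})) ∪ {q : ℝ × ℝ | q.1 ∈ Icc 0 a ∧ q.2 = ϑ₂ q.1} with hNdef
  have hN : volume N = 0 := by
    refine measure_union_null (measure_union_null (measure_union_null ?_ ?_) ?_)
      (null_graph a ϑ₂ hϑcont)
    · rw [Measure.volume_eq_prod, Measure.prod_prod, Real.volume_singleton, zero_mul]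
    · rw [Measure.volume_eq_prod, Measure.prod_prod, Real.volume_singleton, zero_mul]
    · rw [Measure.volume_eq_prod, Measure.prod_prod, Real.volume_singleton, mul_zero]
  have hae : ∀ᵐ q : ℝ × ℝ, q ∉ N := measure_eq_zero_iff_ae_notMem.1 hN
  filter_upwards [hae] with q hqN hqS
  obtain ⟨⟨h1, h2, h3, h4⟩, -, -⟩ := hqS
  have hq1 : 0 < q.1 := by
    rcases h1.lt_or_eq with h | h
    · exact h
    · exact absurd (Or.inl (Or.inl (Or.inl ⟨h.symm, mem_univ _⟩))) hqN
  have hq2 : q.1 < a := by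
    rcases h2.lt_or_eq with h | h
    · exact h
    · exact absurd (Or.inl (Or.inl (Or.inr ⟨h, mem_univ _⟩))) hqN
  have hq3 : 0 < q.2 := by
    rcases h3.lt_or_eq with h | h
    · exact h
    · exact absurd (Or.inl (Or.inr ⟨mem_univ _, h.symm⟩)) hqN
  have hq4 : q.2 < ϑ₂ q.1 := by
    rcases h4.lt_or_eq with h | h
    · exact h
    · exact absurd (Or.inr ⟨⟨h1, h2⟩, h⟩) hqN
  obtain ⟨hd1, hd2⟩ := part1 q hq1 hq2 hq3 hq4
  rw [hd1.deriv, hd2.deriv]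
end
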